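/- arXiv:0902.0215 — 4 statements merged into one kernel-verified Lean document; each statement's English description precedes it below -/
import Mathlib

section
/- Let Q, K ⊂ ℝ^d be compact sets, let t : ℝ^d → ℝ^d be a polynomial map of degree k (i.e. t = (t₁,…,t_d) with each t_j a polynomial of total degree at most k) with t(Q) = K, and let B ⊂ Q be a finite set and C > 0 a constant such that ‖q‖_Q ≤ C ‖q‖_B for every polynomial q of total degree at most kn in d variables. Then for every polynomial p of total degree at most n in d variables, ‖p‖_K ≤ C ‖p‖_{t(B)}. -/
open MvPolynomial Set

lemma totalDegree_bind₁_le {d k : ℕ} (T : Fin d → MvPolynomial (Fin d) ℝ)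
    (hT : ∀ i, (T i).totalDegree ≤ k) (p : MvPolynomial (Fin d) ℝ) :
    (MvPolynomial.bind₁ T p).totalDegree ≤ k * p.totalDegree := by
  conv_lhs => rw [p.as_sum, map_sum]
  refine (totalDegree_finset_sum _ _).trans (Finset.sup_le fun m hm => ?_)
  rw [bind₁_monomial]
  refine (totalDegree_mul _ _).trans ?_
  rw [totalDegree_C, zero_add]
  refine (totalDegree_finset_prod _ _).trans ?_
  calc ∑ i ∈ m.support, ((T i) ^ (m i)).totalDegree
      ≤ ∑ i ∈ m.support, m i * k := Finset.sum_le_sum fun i _ =>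
        (totalDegree_pow _ _).trans (Nat.mul_le_mul_left _ (hT i))
    _ = (∑ i ∈ m.support, m i) * k := by rw [Finset.sum_mul]
    _ ≤ p.totalDegree * k := Nat.mul_le_mul_right _
        (by simpa [Finsupp.sum] using le_totalDegree hm)
    _ = k * p.totalDegree := Nat.mul_comm _ _

/-- Let `Q, K ⊂ ℝ^d` be compact, `t : ℝ^d → ℝ^d` a polynomial map of degree
`k` (components of total degree at most `k`) with `t(Q) = K`, and `B ⊂ Q` a finite set with
constant `C > 0` such that `‖q‖_Q ≤ C ‖q‖_B` for every polynomial `q` of total degree at most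
`k·n`. Then for every polynomial `p` of total degree at most `n`, `‖p‖_K ≤ C ‖p‖_{t(B)}`. -/
theorem stmt4 (d k n : ℕ) (Q K : Set (Fin d → ℝ)) (hQ : IsCompact Q) (hK : IsCompact K)
    (T : Fin d → MvPolynomial (Fin d) ℝ) (hT : ∀ i, (T i).totalDegree ≤ k)
    (hsurj : (fun y i => MvPolynomial.eval y (T i)) '' Q = K)
    (B : Finset (Fin d → ℝ)) (hBQ : (B : Set (Fin d → ℝ)) ⊆ Q)
    (C : ℝ) (hC : 0 < C)
    (hWAM : ∀ q : MvPolynomial (Fin d) ℝ, q.totalDegree ≤ k * n →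
      ∀ y ∈ Q, |MvPolynomial.eval y q| ≤
        C * sSup ((fun b => |MvPolynomial.eval b q|) '' (B : Set (Fin d → ℝ)))) :
    ∀ p : MvPolynomial (Fin d) ℝ, p.totalDegree ≤ n →
      ∀ x ∈ K, |MvPolynomial.eval x p| ≤
        C * sSup ((fun a => |MvPolynomial.eval a p|) ''
          ((fun y i => MvPolynomial.eval y (T i)) '' (B : Set (Fin d → ℝ)))) := by
  intro p hp x hx
  rw [← hsurj] at hx
  obtain ⟨y, hyQ, rfl⟩ := hx
  set q : MvPolynomial (Fin d) ℝ := MvPolynomial.bind₁ T p with hq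
  have heval : ∀ z : Fin d → ℝ,
      MvPolynomial.eval z q = MvPolynomial.eval (fun i => MvPolynomial.eval z (T i)) p := by
    intro z
    simpa using MvPolynomial.eval₂Hom_bind₁ (RingHom.id ℝ) z T p
  have hdeg : q.totalDegree ≤ k * n :=
    (totalDegree_bind₁_le T hT p).trans (Nat.mul_le_mul_left k hp)
  have himg : ((fun a => |MvPolynomial.eval a p|) ''
      ((fun y i => MvPolynomial.eval y (T i)) '' (B : Set (Fin d → ℝ)))) =
      ((fun b => |MvPolynomial.eval b q|) '' (B : Set (Fin d → ℝ))) := by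
    rw [Set.image_image]
    exact Set.image_congr fun b _ => by rw [heval b]
  rw [← heval y, himg]
  exact hWAM q hdeg y hyQ
end

section
/- Let K ⊂ ℂ^d, let A ⊂ K be a finite set and C > 0 a constant such that ‖p‖_K ≤ C ‖p‖_A for every polynomial p of total degree at most n in d variables. Let N = C(n+d, d) and let Z ⊂ A with card(Z) = N be such that |vdm(Z)| ≥ |vdm(Z')| for every subset Z' ⊂ A with card(Z') = N, and vdm(Z) ≠ 0 (i.e. Z is a set of Fekete points of degree n for A). Then every fundamental Lagrange polynomial ℓ_a, a ∈ Z, satisfies ‖ℓ_a‖_A ≤ 1 and ‖ℓ_a‖_K ≤ C, and the Lebesgue constant satisfies sup_{z∈K} Σ_{a∈Z} |ℓ_a(z)| ≤ N·C. -/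
open MvPolynomial

/-- The Vandermonde determinant of the points `z 0, …, z (N-1)` in `ℂ^d` with respect to
the monomials `x^(α j)`, `j = 0, …, N-1`. -/
noncomputable def vdm {d N : ℕ} (α : Fin N → (Fin d →₀ ℕ)) (z : Fin N → (Fin d → ℂ)) : ℂ :=
  Matrix.det (Matrix.of fun i j => MvPolynomial.eval (z i) (MvPolynomial.monomial (α j) (1 : ℂ)))

/-- Let `K ⊂ ℂ^d`, `A ⊂ K` finite with `‖p‖_K ≤ C ‖p‖_A` for every
polynomial of total degree at most `n` (`C > 0`). Let `N = C(n+d,d)` and let `Z ⊂ A` be a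
set of `N` Fekete points of `A` (maximizing `|vdm|` over `N`-point subsets of `A`, with
`vdm(Z) ≠ 0`). Then the fundamental Lagrange polynomials
`ℓ_{i₀}(x) = vdm(Z \ {z i₀} ∪ {x}) / vdm(Z)` satisfy `‖ℓ_{i₀}‖_A ≤ 1` and `‖ℓ_{i₀}‖_K ≤ C`,
and the Lebesgue constant satisfies `sup_{x∈K} Σ_{i₀} |ℓ_{i₀}(x)| ≤ N·C`. -/
theorem stmt10 (d n N : ℕ) (hN : N = (n + d).choose d)
    (α : Fin N → (Fin d →₀ ℕ)) (hαinj : Function.Injective α)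
    (hαdeg : ∀ j, ((α j).sum fun _ e => e) ≤ n)
    (hαall : ∀ β : Fin d →₀ ℕ, (β.sum fun _ e => e) ≤ n → ∃ j, α j = β)
    (K : Set (Fin d → ℂ)) (A : Finset (Fin d → ℂ)) (hAK : (A : Set (Fin d → ℂ)) ⊆ K)
    (C : ℝ) (hC : 0 < C)
    (hWAM : ∀ p : MvPolynomial (Fin d) ℂ, p.totalDegree ≤ n →
      ∀ x ∈ K, ‖MvPolynomial.eval x p‖ ≤
        C * sSup ((fun a => ‖MvPolynomial.eval a p‖) '' (A : Set (Fin d → ℂ))))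
    (z : Fin N → (Fin d → ℂ)) (hzinj : Function.Injective z) (hzA : ∀ i, z i ∈ A)
    (hmax : ∀ w : Fin N → (Fin d → ℂ), Function.Injective w → (∀ i, w i ∈ A) →
      ‖vdm α w‖ ≤ ‖vdm α z‖)
    (hvdm : vdm α z ≠ 0) :
    (∀ i₀ : Fin N, ∀ x ∈ (A : Set (Fin d → ℂ)),
      ‖vdm α (Function.update z i₀ x) / vdm α z‖ ≤ 1) ∧
    (∀ i₀ : Fin N, ∀ x ∈ K,
      ‖vdm α (Function.update z i₀ x) / vdm α z‖ ≤ C) ∧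
    (∀ x ∈ K,
      ∑ i₀ : Fin N, ‖vdm α (Function.update z i₀ x) / vdm α z‖ ≤ N * C) := by
  classical
  have habs : ∀ i₀ : Fin N, ∀ x ∈ A,
      ‖vdm α (Function.update z i₀ x)‖ ≤ ‖vdm α z‖ := by
    intro i₀ x hx
    by_cases hinj : Function.Injective (Function.update z i₀ x)
    · refine hmax _ hinj fun i => ?_
      rcases eq_or_ne i i₀ with h | h
      · rw [h, Function.update_self]; exact hx
      · simpa [Function.update_of_ne h] using hzA i
    · have h0 : vdm α (Function.update z i₀ x) = 0 := by
        simp only [Function.Injective, not_forall] at hinj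
        obtain ⟨i, j, hij, hne⟩ := hinj
        refine Matrix.det_zero_of_row_eq hne ?_
        funext k
        simp [hij]
      simp only [h0, norm_zero]
      exact norm_nonneg _
  have key : ∀ i₀ : Fin N, ∃ P : MvPolynomial (Fin d) ℂ, P.totalDegree ≤ n ∧
      ∀ x, vdm α (Function.update z i₀ x) = MvPolynomial.eval x P := by
    intro i₀
    set M : Matrix (Fin N) (Fin N) (MvPolynomial (Fin d) ℂ) :=
      Matrix.of fun i j => if i = i₀ then (MvPolynomial.monomial (α j) (1 : ℂ))
        else MvPolynomial.C (MvPolynomial.eval (z i) (MvPolynomial.monomial (α j) (1 : ℂ)))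
      with hM
    refine ⟨M.det, ?_, ?_⟩
    · rw [Matrix.det_apply]
      refine le_trans (MvPolynomial.totalDegree_finset_sum _ _) ?_
      refine Finset.sup_le fun σ _ => ?_
      refine le_trans (MvPolynomial.totalDegree_smul_le _ _) ?_
      refine le_trans (MvPolynomial.totalDegree_finset_prod _ _) ?_
      have hterm : ∀ i : Fin N, (M (σ i) i).totalDegree ≤ if σ i = i₀ then n else 0 := by
        intro i
        by_cases h : σ i = i₀
        · simp only [hM, Matrix.of_apply, h, if_pos rfl, if_true]
          exact le_trans (MvPolynomial.totalDegree_monomial_le _ _) (hαdeg i)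
        · simp [hM, h, MvPolynomial.totalDegree_C]
      refine le_trans (Finset.sum_le_sum fun i _ => hterm i) ?_
      simp only [Equiv.apply_eq_iff_eq_symm_apply]
      simp
    · intro x
      rw [RingHom.map_det]
      show Matrix.det _ = Matrix.det _
      congr 1
      funext i j
      rcases eq_or_ne i i₀ with h | h
      · simp [hM, h, Matrix.map_apply]
      · simp [hM, h, Matrix.map_apply, Function.update_of_ne h]
  have hpos : 0 < ‖vdm α z‖ := norm_pos_iff.mpr hvdm
  have habsK : ∀ i₀ : Fin N, ∀ x ∈ K,
      ‖vdm α (Function.update z i₀ x)‖ ≤ C * ‖vdm α z‖ := by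
    intro i₀ x hx
    obtain ⟨P, hPdeg, hP⟩ := key i₀
    rw [hP]
    refine le_trans (hWAM P hPdeg x hx) ?_
    refine mul_le_mul_of_nonneg_left ?_ hC.le
    refine Real.sSup_le ?_ (norm_nonneg _)
    rintro r ⟨a, ha, rfl⟩
    dsimp only
    rw [← hP]
    exact habs i₀ a ha
  have hdiv : ∀ i₀ : Fin N, ∀ x ∈ K,
      ‖vdm α (Function.update z i₀ x) / vdm α z‖ ≤ C := by
    intro i₀ x hx
    rw [norm_div, div_le_iff₀ hpos]
    exact habsK i₀ x hx
  refine ⟨?_, hdiv, ?_⟩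
  · intro i₀ x hx
    rw [norm_div, div_le_one hpos]
    exact habs i₀ x hx
  · intro x hx
    calc ∑ i₀ : Fin N, ‖vdm α (Function.update z i₀ x) / vdm α z‖
        ≤ ∑ _i₀ : Fin N, C := Finset.sum_le_sum fun i₀ _ => hdiv i₀ x hx
      _ = N * C := by simp [mul_comm]
end

section
/- Let a < b be real numbers, let ν ≥ 0, and let g₁, g₂ be real univariate polynomials of degree at most ν with g₁(x) ≤ g₂(x) for all x ∈ [a,b]. Define t : ℝ² → ℝ² by t₁(y) = ((b−a)/2)y₁ + (b+a)/2 and t₂(y) = ((g₂(t₁(y)) − g₁(t₁(y)))/2)y₂ + (g₂(t₁(y)) + g₁(t₁(y)))/2. Then each component of t is a polynomial of total degree at most ν + 1 in (y₁, y₂), and t([−1,1]²) = K, where K = {(x₁, x₂) ∈ ℝ² : a ≤ x₁ ≤ b, g₁(x₁) ≤ x₂ ≤ g₂(x₁)}. -/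
open Set

noncomputable def Lpoly (a b : ℝ) : MvPolynomial (Fin 2) ℝ :=
  MvPolynomial.C ((b - a) / 2) * MvPolynomial.X 0 + MvPolynomial.C ((b + a) / 2)

lemma Lpoly_deg (a b : ℝ) : (Lpoly a b).totalDegree ≤ 1 := by
  unfold Lpoly
  refine le_trans (MvPolynomial.totalDegree_add _ _) ?_
  simp [MvPolynomial.totalDegree_C]
  refine le_trans (MvPolynomial.totalDegree_mul _ _) ?_
  simp [MvPolynomial.totalDegree_C, MvPolynomial.totalDegree_X]

lemma aeval_deg (a b : ℝ) (p : Polynomial ℝ) :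
    (Polynomial.aeval (Lpoly a b) p).totalDegree ≤ p.natDegree := by
  rw [Polynomial.aeval_eq_sum_range]
  refine le_trans (MvPolynomial.totalDegree_finset_sum _ _) ?_
  refine Finset.sup_le fun i hi => ?_
  refine le_trans (MvPolynomial.totalDegree_smul_le _ _) ?_
  refine le_trans (MvPolynomial.totalDegree_pow _ _) ?_
  have := Lpoly_deg a b
  have hi' : i ≤ p.natDegree := Nat.lt_succ_iff.mp (Finset.mem_range.mp hi)
  calc i * (Lpoly a b).totalDegree ≤ i * 1 := Nat.mul_le_mul_left i this
    _ ≤ p.natDegree := by omega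

lemma aeval_eval (a b : ℝ) (p : Polynomial ℝ) (y : Fin 2 → ℝ) :
    MvPolynomial.eval y (Polynomial.aeval (Lpoly a b) p)
      = p.eval (MvPolynomial.eval y (Lpoly a b)) := by
  induction p using Polynomial.induction_on' with
  | add p q hp hq => simp [hp, hq]
  | monomial n c => simp [Polynomial.aeval_monomial]

lemma Lpoly_eval (a b : ℝ) (y : Fin 2 → ℝ) :
    MvPolynomial.eval y (Lpoly a b) = (b - a) / 2 * y 0 + (b + a) / 2 := by
  simp [Lpoly]

/-- Let `a < b`, `ν ≥ 0`, and let `g₁, g₂` be real univariate polynomials of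
degree at most `ν` with `g₁ ≤ g₂` on `[a,b]`. Define `t : ℝ² → ℝ²` by
`t₁(y) = ((b−a)/2)y₁ + (b+a)/2` and
`t₂(y) = ((g₂(t₁(y)) − g₁(t₁(y)))/2)y₂ + (g₂(t₁(y)) + g₁(t₁(y)))/2`.
Then each component of `t` is a polynomial of total degree at most `ν + 1`, and
`t([−1,1]²) = K := {(x₁,x₂) : a ≤ x₁ ≤ b, g₁(x₁) ≤ x₂ ≤ g₂(x₁)}`. -/
theorem stmt17 (a b : ℝ) (hab : a < b) (ν : ℕ) (g₁ g₂ : Polynomial ℝ)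
    (hg₁ : g₁.natDegree ≤ ν) (hg₂ : g₂.natDegree ≤ ν)
    (hle : ∀ x ∈ Set.Icc a b, g₁.eval x ≤ g₂.eval x) :
    (∃ P : Fin 2 → MvPolynomial (Fin 2) ℝ,
      (∀ i, (P i).totalDegree ≤ ν + 1) ∧
      ∀ y : Fin 2 → ℝ,
        MvPolynomial.eval y (P 0) = (b - a) / 2 * y 0 + (b + a) / 2 ∧
        MvPolynomial.eval y (P 1) =
          (g₂.eval ((b - a) / 2 * y 0 + (b + a) / 2) -
              g₁.eval ((b - a) / 2 * y 0 + (b + a) / 2)) / 2 * y 1 +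
            (g₂.eval ((b - a) / 2 * y 0 + (b + a) / 2) +
              g₁.eval ((b - a) / 2 * y 0 + (b + a) / 2)) / 2) ∧
    (fun y : Fin 2 → ℝ =>
        ![(b - a) / 2 * y 0 + (b + a) / 2,
          (g₂.eval ((b - a) / 2 * y 0 + (b + a) / 2) -
              g₁.eval ((b - a) / 2 * y 0 + (b + a) / 2)) / 2 * y 1 +
            (g₂.eval ((b - a) / 2 * y 0 + (b + a) / 2) +
              g₁.eval ((b - a) / 2 * y 0 + (b + a) / 2)) / 2]) ''
      {y : Fin 2 → ℝ | y 0 ∈ Set.Icc (-1 : ℝ) 1 ∧ y 1 ∈ Set.Icc (-1 : ℝ) 1} =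
      {x : Fin 2 → ℝ | x 0 ∈ Set.Icc a b ∧ x 1 ∈ Set.Icc (g₁.eval (x 0)) (g₂.eval (x 0))} := by
  constructor
  · -- polynomial part
    refine ⟨![Lpoly a b,
      MvPolynomial.C (1/2 : ℝ) * Polynomial.aeval (Lpoly a b) (g₂ - g₁) * MvPolynomial.X 1 +
      MvPolynomial.C (1/2 : ℝ) * Polynomial.aeval (Lpoly a b) (g₂ + g₁)], ?_, ?_⟩
    · intro i
      fin_cases i
      · simpa using le_trans (Lpoly_deg a b) (by omega)
      · simp only [Matrix.cons_val_one, Matrix.head_cons]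
        refine le_trans (MvPolynomial.totalDegree_add _ _) (max_le ?_ ?_)
        · refine le_trans (MvPolynomial.totalDegree_mul _ _) ?_
          have h1 : (MvPolynomial.C (1/2 : ℝ) *
              Polynomial.aeval (Lpoly a b) (g₂ - g₁)).totalDegree ≤ ν := by
            refine le_trans (MvPolynomial.totalDegree_mul _ _) ?_
            simp only [MvPolynomial.totalDegree_C, zero_add]
            refine le_trans (aeval_deg a b _) ?_
            exact le_trans (Polynomial.natDegree_sub_le _ _) (max_le hg₂ hg₁)
          have h2 : (MvPolynomial.X (1 : Fin 2) :
              MvPolynomial (Fin 2) ℝ).totalDegree ≤ 1 := by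
            simp [MvPolynomial.totalDegree_X]
          omega
        · refine le_trans (MvPolynomial.totalDegree_mul _ _) ?_
          simp only [MvPolynomial.totalDegree_C, zero_add]
          refine le_trans (aeval_deg a b _) (le_trans ?_ (Nat.le_succ ν))
          exact le_trans (Polynomial.natDegree_add_le _ _) (max_le hg₂ hg₁)
    · intro y
      constructor
      · simpa using Lpoly_eval a b y
      · simp only [Matrix.cons_val_one, Matrix.head_cons, Matrix.cons_val_zero, map_add, map_mul,
          MvPolynomial.eval_C, MvPolynomial.eval_X, aeval_eval, Lpoly_eval,
          Polynomial.eval_sub, Polynomial.eval_add]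
        ring
  · -- image part
    ext x
    simp only [Set.mem_image, Set.mem_setOf_eq, Set.mem_Icc]
    constructor
    · rintro ⟨y, ⟨⟨hy0l, hy0r⟩, ⟨hy1l, hy1r⟩⟩, rfl⟩
      have hba : (0:ℝ) < b - a := by linarith
      have hx0 : a ≤ (b - a) / 2 * y 0 + (b + a) / 2 ∧
          (b - a) / 2 * y 0 + (b + a) / 2 ≤ b := by
        constructor <;> nlinarith
      have hd : 0 ≤ g₂.eval ((b - a) / 2 * y 0 + (b + a) / 2) -
          g₁.eval ((b - a) / 2 * y 0 + (b + a) / 2) := by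
        have := hle _ (Set.mem_Icc.mpr hx0)
        linarith
      refine ⟨by simpa using hx0, ?_⟩
      simp only [Matrix.cons_val_one, Matrix.head_cons, Matrix.cons_val_zero]
      constructor <;> nlinarith
    · rintro ⟨⟨hx0l, hx0r⟩, ⟨hx1l, hx1r⟩⟩
      have hba : (0:ℝ) < b - a := by linarith
      set y0 : ℝ := (2 * x 0 - (b + a)) / (b - a) with hy0def
      have hy0 : (b - a) / 2 * y0 + (b + a) / 2 = x 0 := by
        field_simp [hy0def]
        have h : (b - a) * y0 = 2 * x 0 - (b + a) := by rw [hy0def]; field_simp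
        linear_combination h
      have hy0mem : -1 ≤ y0 ∧ y0 ≤ 1 := by
        rw [hy0def]
        constructor
        · rw [le_div_iff₀ hba]; linarith
        · rw [div_le_iff₀ hba]; linarith
      set d : ℝ := g₂.eval (x 0) - g₁.eval (x 0) with hddef
      have hd : 0 ≤ d := by rw [hddef]; linarith
      rcases eq_or_lt_of_le hd with hd0 | hd0
      · -- degenerate case: fiber is a point, take y1 = 0
        refine ⟨![y0, 0], ⟨by simpa using hy0mem, by simp⟩, ?_⟩
        funext i
        fin_cases i
        · simpa using hy0
        · have h1 : g₂.eval (x 0) = g₁.eval (x 0) := by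
            have := hd0.symm; rw [hddef] at this; linarith
          have h2 : x 1 = g₁.eval (x 0) := by rw [h1] at hx1r; linarith
          show ![(b - a) / 2 * y0 + (b + a) / 2, _] 1 = x 1
          simp only [Matrix.cons_val_one, Matrix.head_cons, Matrix.cons_val_zero]
          rw [hy0, h1, h2]; ring
      · refine ⟨![y0, (2 * x 1 - (g₂.eval (x 0) + g₁.eval (x 0))) / d],
          ⟨by simpa using hy0mem, ?_⟩, ?_⟩
        · simp only [Matrix.cons_val_one, Matrix.head_cons, Matrix.cons_val_zero, Set.mem_Icc]
          constructor
          · rw [le_div_iff₀ hd0]; rw [hddef]; linarith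
          · rw [div_le_iff₀ hd0]; rw [hddef]; linarith
        · funext i
          fin_cases i
          · simpa using hy0
          · show ![(b - a) / 2 * y0 + (b + a) / 2, _] 1 = x 1
            simp only [Matrix.cons_val_one, Matrix.head_cons, Matrix.cons_val_zero]
            rw [hy0]
            rw [show (g₂.eval (x 0) - g₁.eval (x 0)) / 2 = d / 2 by rw [hddef]]
            field_simp
            ring
end

section
/- Let K ⊂ ℝ^d be compact, let A ⊂ K be a finite set with M = card(A), and let C > 0 be a constant such that ‖p‖_K ≤ C ‖p‖_A for every polynomial p of total degree at most n in d variables. Let f : K → ℝ be continuous, and let L_n f be a polynomial of total degree at most n minimizing Σ_{a∈A} (f(a) − p(a))² over all polynomials p of total degree at most n. Then ‖f − L_n f‖_K ≤ (1 + C(1 + √M)) · min{ ‖f − p‖_K : p of total degree ≤ n }. -/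
open MvPolynomial Set

/-- Let `K ⊂ ℝ^d` be compact, `A ⊂ K` finite with `M = card(A)`, and
`C > 0` with `‖p‖_K ≤ C ‖p‖_A` for every polynomial `p` of total degree at most `n`. Let
`f : K → ℝ` be continuous and let `L` be a discrete least-squares approximant of degree `n`
to `f` on `A`. Then `‖f − L‖_K ≤ (1 + C(1 + √M)) ‖f − p‖_K` for every polynomial `p` of
total degree at most `n` (i.e. the bound holds with the min over all such `p`). -/
theorem stmt19 (d n : ℕ) (K : Set (Fin d → ℝ)) (hK : IsCompact K)
    (A : Finset (Fin d → ℝ)) (hAK : (A : Set (Fin d → ℝ)) ⊆ K)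
    (M : ℕ) (hM : M = A.card) (C : ℝ) (hC : 0 < C)
    (hWAM : ∀ p : MvPolynomial (Fin d) ℝ, p.totalDegree ≤ n →
      ∀ x ∈ K, |MvPolynomial.eval x p| ≤
        C * sSup ((fun a => |MvPolynomial.eval a p|) '' (A : Set (Fin d → ℝ))))
    (f : (Fin d → ℝ) → ℝ) (hf : ContinuousOn f K)
    (L : MvPolynomial (Fin d) ℝ) (hL : L.totalDegree ≤ n)
    (hLS : ∀ p : MvPolynomial (Fin d) ℝ, p.totalDegree ≤ n →
      ∑ a ∈ A, (f a - MvPolynomial.eval a L) ^ 2 ≤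
        ∑ a ∈ A, (f a - MvPolynomial.eval a p) ^ 2) :
    ∀ p : MvPolynomial (Fin d) ℝ, p.totalDegree ≤ n →
      ∀ x ∈ K, |f x - MvPolynomial.eval x L| ≤
        (1 + C * (1 + Real.sqrt M)) * sSup ((fun y => |f y - MvPolynomial.eval y p|) '' K) := by
  intro p hp x hx
  set E : ℝ := sSup ((fun y => |f y - MvPolynomial.eval y p|) '' K) with hE
  have hcont : ContinuousOn (fun y => |f y - MvPolynomial.eval y p|) K :=
    (hf.sub (MvPolynomial.continuous_eval p).continuousOn).abs
  have hbdd : BddAbove ((fun y => |f y - MvPolynomial.eval y p|) '' K) :=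
    (hK.image_of_continuousOn hcont).bddAbove
  have hEx : ∀ y ∈ K, |f y - MvPolynomial.eval y p| ≤ E := fun y hy =>
    le_csSup hbdd ⟨y, hy, rfl⟩
  have hE0 : 0 ≤ E := le_trans (abs_nonneg _) (hEx x hx)
  have hs0 : (0:ℝ) ≤ Real.sqrt M := Real.sqrt_nonneg _
  -- the discrete error bound
  have hfa : ∀ a ∈ A, |f a - MvPolynomial.eval a L| ≤ Real.sqrt M * E := by
    intro a ha
    have h1 : (f a - MvPolynomial.eval a L) ^ 2 ≤
        ∑ b ∈ A, (f b - MvPolynomial.eval b L) ^ 2 :=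
      Finset.single_le_sum (f := fun b => (f b - MvPolynomial.eval b L) ^ 2)
        (fun b _ => sq_nonneg _) ha
    have h2 := hLS p hp
    have h3 : ∑ b ∈ A, (f b - MvPolynomial.eval b p) ^ 2 ≤ (M : ℝ) * E ^ 2 := by
      calc ∑ b ∈ A, (f b - MvPolynomial.eval b p) ^ 2
          ≤ ∑ _b ∈ A, E ^ 2 := by
            refine Finset.sum_le_sum (fun b hb => ?_)
            have := hEx b (hAK hb)
            nlinarith [abs_nonneg (f b - MvPolynomial.eval b p),
              sq_abs (f b - MvPolynomial.eval b p)]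
        _ = (M : ℝ) * E ^ 2 := by rw [Finset.sum_const, hM]; ring
    have h4 : (f a - MvPolynomial.eval a L) ^ 2 ≤ (Real.sqrt M * E) ^ 2 := by
      have : (Real.sqrt M) ^ 2 = (M : ℝ) := Real.sq_sqrt (by positivity)
      nlinarith
    calc |f a - MvPolynomial.eval a L|
        = Real.sqrt ((f a - MvPolynomial.eval a L) ^ 2) := (Real.sqrt_sq_eq_abs _).symm
      _ ≤ Real.sqrt ((Real.sqrt M * E) ^ 2) := Real.sqrt_le_sqrt h4
      _ = |Real.sqrt M * E| := Real.sqrt_sq_eq_abs _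
      _ = Real.sqrt M * E := abs_of_nonneg (by positivity)
  -- bound on p - L over A
  have hsupA : sSup ((fun a => |MvPolynomial.eval a (p - L)|) '' (A : Set (Fin d → ℝ)))
      ≤ (1 + Real.sqrt M) * E := by
    apply Real.sSup_le
    · rintro _ ⟨a, ha, rfl⟩
      have haA : a ∈ A := ha
      have h1 := hEx a (hAK ha)
      have h2 := hfa a haA
      show |MvPolynomial.eval a (p - L)| ≤ (1 + Real.sqrt M) * E
      have : |MvPolynomial.eval a (p - L)| =
          |(f a - MvPolynomial.eval a L) - (f a - MvPolynomial.eval a p)| := by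
        rw [map_sub]; ring_nf
      rw [this]
      calc |(f a - MvPolynomial.eval a L) - (f a - MvPolynomial.eval a p)|
          ≤ |f a - MvPolynomial.eval a L| + |f a - MvPolynomial.eval a p| := abs_sub _ _
        _ ≤ Real.sqrt M * E + E := add_le_add h2 h1
        _ = (1 + Real.sqrt M) * E := by ring
    · positivity
  have hdeg : (p - L).totalDegree ≤ n :=
    le_trans (MvPolynomial.totalDegree_sub p L) (max_le hp hL)
  have hPL : |MvPolynomial.eval x (p - L)| ≤ C * ((1 + Real.sqrt M) * E) :=
    le_trans (hWAM (p - L) hdeg x hx) (mul_le_mul_of_nonneg_left hsupA hC.le)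
  have hfp := hEx x hx
  have : |f x - MvPolynomial.eval x L| ≤
      |f x - MvPolynomial.eval x p| + |MvPolynomial.eval x (p - L)| := by
    rw [map_sub]
    have : f x - MvPolynomial.eval x L =
        (f x - MvPolynomial.eval x p) + (MvPolynomial.eval x p - MvPolynomial.eval x L) := by
      ring
    rw [this]; exact abs_add_le _ _
  calc |f x - MvPolynomial.eval x L|
      ≤ |f x - MvPolynomial.eval x p| + |MvPolynomial.eval x (p - L)| := this
    _ ≤ E + C * ((1 + Real.sqrt M) * E) := add_le_add hfp hPL
    _ = (1 + C * (1 + Real.sqrt M)) * E := by ring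
end
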